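/- arXiv:math/0502148 — 3 statements merged into one kernel-verified Lean document; each statement's English description precedes it below -/
import Mathlib

section
/- For each K ≥ 1, the set σ⁻¹(K) ∩ G = {(w_n) ∈ G : κ₁(w_n) = κ₁(w_K) for all n ≥ K, and either K = 1 or κ₁(w_{K−1}) ≠ κ₁(w_K)} has empty interior in G (with the subspace topology from lim← G_n); that is, it contains no nonempty open subset of G. -/
/-!
Setting: `H 1, H 2, …` is a sequence of nontrivial groups (`H 0` is an unused dummy
factor).  `Gₙ = H 1 ∗ ⋯ ∗ H n` is realized canonically as the set of elements of the big
free product `Monoid.CoprodI H` whose reduced word only uses letters of type `i` with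
`1 ≤ i ≤ n` (in particular `G₀` is trivial).  `ψ n : G (n+1) → G n` is realized as the
homomorphism of the big free product which is the identity on each `H i` with `i ≤ n`
and kills all the other factors.  The inverse limit `lim← Gₙ` is the set of sequences
`f` with `f n ∈ Gₙ` and `ψ n (f (n+1)) = f n`; since each `Gₙ` is discrete it carries the
topology inherited from the product of discrete topologies (we give the big free product
the discrete topology `⊥`).
-/

noncomputable section

/-- The reduced word of an element of the free product, as a list of letters. -/
noncomputable def redWord {H : ℕ → Type*} [∀ i, Group (H i)] (g : Monoid.CoprodI H) :
    List (Σ i, H i) :=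
  letI : ∀ i, DecidableEq (H i) := fun _ => Classical.decEq _
  (Monoid.CoprodI.Word.equiv g).toList

/-- `kappa m g` : the (possibly unreduced) word obtained by deleting from the reduced
word of `g` all letters of type `i` with `i ≥ m + 1`. -/
noncomputable def kappa {H : ℕ → Type*} [∀ i, Group (H i)] (m : ℕ) (g : Monoid.CoprodI H) :
    List (Σ i, H i) :=
  (redWord g).filter (fun l => decide (l.1 ≤ m))

/-- `ψ n`, extended to the whole free product: the homomorphism which is the identity on
each factor `H i` with `i ≤ n` and kills all factors `H i` with `i > n`. -/
noncomputable def psi {H : ℕ → Type*} [∀ i, Group (H i)] (n : ℕ) :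
    Monoid.CoprodI H →* Monoid.CoprodI H :=
  Monoid.CoprodI.lift (fun i => if i ≤ n then (Monoid.CoprodI.of : H i →* Monoid.CoprodI H) else 1)

/-- Each group `Gₙ` (and hence the big free product) is given the discrete topology. -/
instance (H : ℕ → Type*) [∀ i, Group (H i)] : TopologicalSpace (Monoid.CoprodI H) := ⊥

/-- The inverse limit `lim← Gₙ`:  sequences `(w₀, w₁, w₂, …)` with `wₙ ∈ Gₙ`
(i.e. the reduced word of `wₙ` uses only letters of type `i` with `1 ≤ i ≤ n`; the `n = 0`
term is the trivial dummy extension of the inverse system) satisfying `ψ n (w (n+1)) = w n`.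
As a subset of the product `Π n, CoprodI H` of discrete spaces it carries the product
(subspace) topology. -/
def invLim (H : ℕ → Type*) [∀ i, Group (H i)] : Set (ℕ → Monoid.CoprodI H) :=
  {f | (∀ n, ∀ l ∈ redWord (f n), 1 ≤ l.1 ∧ l.1 ≤ n) ∧ ∀ n, psi n (f (n + 1)) = f n}

/-- The fiber `σ⁻¹(N)`:  those `(wₙ) ∈ lim← Gₙ` such that `κ₁(wₙ) = κ₁(w_N)` for all
`n ≥ N`, and either `N = 1` or `κ₁(w_{N-1}) ≠ κ₁(w_N)`. -/
def sigmaFiber (H : ℕ → Type*) [∀ i, Group (H i)] (N : ℕ) : Set (invLim H) :=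
  {f | (∀ n, N ≤ n → kappa 1 (f.1 n) = kappa 1 (f.1 N)) ∧
    (N = 1 ∨ kappa 1 (f.1 (N - 1)) ≠ kappa 1 (f.1 N))}


/-- The subgroup `G ⊆ lim← Gₙ` of sequences `(wₙ)` such that for each `m ≥ 1` the
sequence of words `κ_m(w₁), κ_m(w₂), …` is eventually constant.  It carries the subspace
topology from `lim← Gₙ`. -/
def bigG (H : ℕ → Type*) [∀ i, Group (H i)] : Set (invLim H) :=
  {f | ∀ m, 1 ≤ m → ∃ N, ∀ n, N ≤ n → kappa m (f.1 n) = kappa m (f.1 N)}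

namespace SigmaAux

open Monoid.CoprodI

variable {H : ℕ → Type*} [∀ i, Group (H i)]

theorem redWord_prod (W : Monoid.CoprodI.Word H) : redWord W.prod = W.toList := by
  letI : ∀ i, DecidableEq (H i) := fun _ => Classical.decEq _
  show (Monoid.CoprodI.Word.equiv W.prod).toList = W.toList
  congr 1
  have h : W.prod = Monoid.CoprodI.Word.equiv.symm W := rfl
  rw [h, Equiv.apply_symm_apply]

theorem prod_redWord (g : Monoid.CoprodI H) :
    ((redWord g).map fun l => (Monoid.CoprodI.of l.2 : Monoid.CoprodI H)).prod = g := by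
  letI : ∀ i, DecidableEq (H i) := fun _ => Classical.decEq _
  show (Monoid.CoprodI.Word.equiv g).prod = g
  exact Monoid.CoprodI.Word.equiv.symm_apply_apply g

theorem psi_of_le {i n : ℕ} (h : i ≤ n) (a : H i) :
    psi n (Monoid.CoprodI.of a) = Monoid.CoprodI.of a := by
  simp [psi, h]

theorem psi_of_gt {i n : ℕ} (h : ¬ i ≤ n) (a : H i) :
    psi n (Monoid.CoprodI.of a) = 1 := by
  simp [psi, h]

theorem psi_fix {n : ℕ} {g : Monoid.CoprodI H} (hg : ∀ l ∈ redWord g, l.1 ≤ n) :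
    psi n g = g := by
  conv_lhs => rw [← prod_redWord g]
  conv_rhs => rw [← prod_redWord g]
  rw [map_list_prod, List.map_map]
  congr 1
  apply List.map_congr_left
  intro l hl
  exact psi_of_le (hg l hl) l.2

theorem redWord_ne_one {g : Monoid.CoprodI H} : ∀ l ∈ redWord g, l.2 ≠ 1 := by
  letI : ∀ i, DecidableEq (H i) := fun _ => Classical.decEq _
  exact (Monoid.CoprodI.Word.equiv g).ne_one

theorem redWord_chain {g : Monoid.CoprodI H} :
    (redWord g).Chain' (fun l l' => l.1 ≠ l'.1) := by
  letI : ∀ i, DecidableEq (H i) := fun _ => Classical.decEq _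
  exact (Monoid.CoprodI.Word.equiv g).chain_ne


theorem psi_fix_list {n : ℕ} (L : List (Σ i, H i)) (hL : ∀ l ∈ L, l.1 ≤ n) :
    psi n ((L.map fun l => (Monoid.CoprodI.of l.2 : Monoid.CoprodI H)).prod)
      = (L.map fun l => (Monoid.CoprodI.of l.2 : Monoid.CoprodI H)).prod := by
  rw [map_list_prod, List.map_map]
  congr 1
  apply List.map_congr_left
  intro l hl
  exact psi_of_le (hL l hl) l.2

theorem word_prod_def (W : Monoid.CoprodI.Word H) :
    W.prod = (W.toList.map fun l => (Monoid.CoprodI.of l.2 : Monoid.CoprodI H)).prod := rfl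

theorem mem_of_getLast? {α : Type*} {l : List α} {a : α} (h : a ∈ l.getLast?) : a ∈ l := by
  obtain ⟨hne, rfl⟩ := List.mem_getLast?_eq_getLast h
  exact List.getLast_mem hne

theorem key (n₁ : ℕ) (hn₁ : 1 ≤ n₁) (g : Monoid.CoprodI H)
    (hg : ∀ l ∈ redWord g, 1 ≤ l.1 ∧ l.1 ≤ n₁)
    (x : H 1) (hx : x ≠ 1) (t : H (n₁ + 1)) (ht : t ≠ 1) :
    ∃ h : Monoid.CoprodI H,
      (∀ l ∈ redWord h, 1 ≤ l.1 ∧ l.1 ≤ n₁ + 1) ∧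
      psi n₁ h = g ∧
      (kappa 1 g).length < (kappa 1 h).length := by
  have hT1 : ¬ (n₁ + 1 ≤ 1) := by omega
  have hTn : ¬ (n₁ + 1 ≤ n₁) := by omega
  have h1T : (1 : ℕ) ≠ n₁ + 1 := by omega
  have hxi : x⁻¹ ≠ 1 := inv_ne_one.mpr hx
  have hLne := redWord_ne_one (g := g)
  have hchain := redWord_chain (g := g)
  rcases List.eq_nil_or_concat' (redWord g) with hnil | ⟨L', a, hL⟩
  · -- g = 1 case
    refine ⟨(⟨[⟨1, x⁻¹⟩, ⟨n₁+1, t⟩, ⟨1, x⟩, ⟨n₁+1, t⟩, ⟨1, x⁻¹⟩, ⟨n₁+1, t⟩, ⟨1, x⟩], ?_, ?_⟩ :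
        Monoid.CoprodI.Word H).prod, ?_, ?_, ?_⟩
    · intro l hl; fin_cases hl <;> simp [hx, hxi, ht]
    · simp [List.isChain_cons_cons, h1T, h1T.symm, Nat.one_le_iff_ne_zero.mp hn₁]
    · rw [redWord_prod]; intro l hl; fin_cases hl <;> simp
    · have hg1 : g = 1 := by
        have := prod_redWord g
        rw [hnil] at this; simpa using this.symm
      rw [hg1, word_prod_def]
      simp only [List.map_cons, List.map_nil, List.prod_cons, List.prod_nil, map_mul, map_one,
        psi_of_le hn₁, psi_of_gt hTn]
      simp
    · rw [kappa, kappa, redWord_prod, hnil]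
      simp [hT1]
  · -- redWord g = L' ++ [a]
    have hL'mem : ∀ l ∈ L', l ∈ redWord g := by
      intro l hl; rw [hL]; exact List.mem_append_left _ hl
    have hL'ty : ∀ l ∈ L', l.1 ≤ n₁ := fun l hl => (hg l (hL'mem l hl)).2
    have hamem : a ∈ redWord g := by rw [hL]; exact List.mem_append_right _ (by simp)
    have hgprod : ((L'.map fun l => (Monoid.CoprodI.of l.2 : Monoid.CoprodI H)).prod)
        * Monoid.CoprodI.of a.2 = g := by
      conv_rhs => rw [← prod_redWord g, hL]
      simp
    have hchain' : L'.Chain' (fun l l' => l.1 ≠ l'.1) ∧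
        ∀ p ∈ L'.getLast?, p.1 ≠ a.1 := by
      rw [hL] at hchain; replace hchain := List.isChain_append.mp hchain
      exact ⟨hchain.1, fun p hp => hchain.2.2 p hp a (by simp)⟩
    by_cases ha1 : a.1 = 1
    · -- last letter has type 1
      obtain ⟨i, z⟩ := a
      simp only at ha1
      subst ha1
      have hz : z ≠ 1 := hLne _ hamem
      by_cases hzx : z * x⁻¹ = 1
      · -- z = x : drop the last letter and append [t, x, t, x⁻¹, t, x]
        have hzx' : z = x := by rwa [mul_inv_eq_one] at hzx
        refine ⟨(⟨L' ++ [⟨n₁+1, t⟩, ⟨1, x⟩, ⟨n₁+1, t⟩, ⟨1, x⁻¹⟩, ⟨n₁+1, t⟩, ⟨1, x⟩], ?_, ?_⟩ :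
            Monoid.CoprodI.Word H).prod, ?_, ?_, ?_⟩
        · intro l hl
          rcases List.mem_append.mp hl with h' | h'
          · exact hLne _ (hL'mem _ h')
          · fin_cases h' <;> simp [hx, hxi, ht]
        · rw [List.isChain_append]
          refine ⟨hchain'.1, by simp [List.isChain_cons_cons, h1T, h1T.symm, Nat.one_le_iff_ne_zero.mp hn₁], ?_⟩
          intro p hp q hq
          have hple := hL'ty p (mem_of_getLast? hp)
          simp only [List.head?_cons, Option.mem_def, Option.some.injEq] at hq
          rw [← hq]
          show p.1 ≠ n₁ + 1
          omega
        · rw [redWord_prod]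
          intro l hl
          rcases List.mem_append.mp hl with h' | h'
          · have := hg l (hL'mem _ h'); omega
          · fin_cases h' <;> simp
        · rw [word_prod_def]
          simp only [List.map_append, List.prod_append, List.map_cons, List.map_nil,
            List.prod_cons, List.prod_nil, map_mul, psi_fix_list L' hL'ty,
            psi_of_le hn₁, psi_of_gt hTn]
          rw [← hgprod, hzx']
          simp [map_inv, mul_assoc]
        · rw [kappa, kappa, redWord_prod, hL]
          simp only [List.filter_append, List.length_append]
          simp [List.filter_cons, hT1]
      · -- merge z with x⁻¹
        refine ⟨(⟨L' ++ [⟨1, z * x⁻¹⟩, ⟨n₁+1, t⟩, ⟨1, x⟩, ⟨n₁+1, t⟩, ⟨1, x⁻¹⟩, ⟨n₁+1, t⟩, ⟨1, x⟩],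
            ?_, ?_⟩ : Monoid.CoprodI.Word H).prod, ?_, ?_, ?_⟩
        · intro l hl
          rcases List.mem_append.mp hl with h' | h'
          · exact hLne _ (hL'mem _ h')
          · fin_cases h' <;> simp [hx, hxi, ht, hzx]
        · rw [List.isChain_append]
          refine ⟨hchain'.1, by simp [List.isChain_cons_cons, h1T, h1T.symm, Nat.one_le_iff_ne_zero.mp hn₁], ?_⟩
          intro p hp q hq
          simp only [List.head?_cons, Option.mem_def, Option.some.injEq] at hq
          rw [← hq]
          exact hchain'.2 p hp
        · rw [redWord_prod]
          intro l hl
          rcases List.mem_append.mp hl with h' | h'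
          · have := hg l (hL'mem _ h'); omega
          · fin_cases h' <;> simp
        · rw [word_prod_def]
          simp only [List.map_append, List.prod_append, List.map_cons, List.map_nil,
            List.prod_cons, List.prod_nil, map_mul, psi_fix_list L' hL'ty,
            psi_of_le hn₁, psi_of_gt hTn]
          rw [← hgprod]
          simp [map_mul, map_inv, mul_assoc]
        · rw [kappa, kappa, redWord_prod, hL]
          simp only [List.filter_append, List.length_append]
          simp [List.filter_cons, hT1]
    · -- last letter not of type 1 : just append the seven letters
      refine ⟨(⟨redWord g ++ [⟨1, x⁻¹⟩, ⟨n₁+1, t⟩, ⟨1, x⟩, ⟨n₁+1, t⟩, ⟨1, x⁻¹⟩, ⟨n₁+1, t⟩, ⟨1, x⟩],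
          ?_, ?_⟩ : Monoid.CoprodI.Word H).prod, ?_, ?_, ?_⟩
      · intro l hl
        rcases List.mem_append.mp hl with h' | h'
        · exact hLne _ h'
        · fin_cases h' <;> simp [hx, hxi, ht]
      · rw [List.isChain_append]
        refine ⟨hchain, by simp [List.isChain_cons_cons, h1T, h1T.symm, Nat.one_le_iff_ne_zero.mp hn₁], ?_⟩
        intro p hp q hq
        rw [hL, List.getLast?_concat] at hp
        simp only [List.head?_cons, Option.mem_def, Option.some.injEq] at hp hq
        rw [← hp, ← hq]
        exact ha1
      · rw [redWord_prod]
        intro l hl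
        rcases List.mem_append.mp hl with h' | h'
        · have := hg l h'; omega
        · fin_cases h' <;> simp
      · rw [word_prod_def]
        simp only [List.map_append, List.prod_append, List.map_cons, List.map_nil,
          List.prod_cons, List.prod_nil, map_mul,
          psi_fix_list (redWord g) (fun l hl => (hg l hl).2),
          psi_of_le hn₁, psi_of_gt hTn, prod_redWord g]
        rw [psi_fix (fun l hl => (hg l hl).2)]
        simp [map_inv, mul_assoc]
      · rw [kappa, kappa, redWord_prod]
        simp only [List.filter_append, List.length_append]
        simp [List.filter_cons, hT1]

end SigmaAux

/-- For each `K ≥ 1`, the set `σ⁻¹(K) ∩ G` has empty interior in `G`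
(with the subspace topology from `lim← Gₙ`); i.e. it contains no nonempty open subset
of `G`. -/

theorem sigmaFiber_interior_empty (H : ℕ → Type*) [∀ i, Group (H i)]
    (hH : ∀ i, 1 ≤ i → Nontrivial (H i)) (K : ℕ) (hK : 1 ≤ K) :
    interior {f : bigG H | (∀ n, K ≤ n → kappa 1 (f.1.1 n) = kappa 1 (f.1.1 K)) ∧
      (K = 1 ∨ kappa 1 (f.1.1 (K - 1)) ≠ kappa 1 (f.1.1 K))} = ∅ := by
  classical
  rw [Set.eq_empty_iff_forall_notMem]
  intro f hf
  obtain ⟨hf1, -⟩ := interior_subset hf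
  obtain ⟨U, hUS, hUopen, hfU⟩ := mem_interior.mp hf
  obtain ⟨V, hVopen, rfl⟩ := isOpen_induced_iff.mp hUopen
  obtain ⟨Wo, hWopen, rfl⟩ := isOpen_induced_iff.mp hVopen
  rw [isOpen_pi_iff] at hWopen
  obtain ⟨I, u, hIu, hsub⟩ := hWopen f.1.1 hfU
  set n₁ := max K (I.sup id) with hn₁def
  have hKn₁ : K ≤ n₁ := le_max_left _ _
  have hn₁1 : 1 ≤ n₁ := le_trans hK hKn₁
  haveI := hH 1 le_rfl
  haveI := hH (n₁ + 1) (by omega)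
  obtain ⟨x, hx⟩ := exists_ne (1 : H 1)
  obtain ⟨t, ht⟩ := exists_ne (1 : H (n₁ + 1))
  obtain ⟨h, hhty, hhpsi, hhlen⟩ := SigmaAux.key n₁ hn₁1 (f.1.1 n₁) (f.1.2.1 n₁) x hx t ht
  set g' : ℕ → Monoid.CoprodI H := fun n => if n ≤ n₁ then f.1.1 n else h with hg'def
  have hg'inv : g' ∈ invLim H := by
    constructor
    · intro n l hl
      by_cases hn : n ≤ n₁
      · rw [hg'def] at hl
        simp only [if_pos hn] at hl
        exact f.1.2.1 n l hl
      · rw [hg'def] at hl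
        simp only [if_neg hn] at hl
        have := hhty l hl
        omega
    · intro n
      by_cases h1 : n + 1 ≤ n₁
      · simp only [hg'def, if_pos h1, if_pos (show n ≤ n₁ by omega)]
        exact f.1.2.2 n
      · by_cases h2 : n ≤ n₁
        · have hn : n = n₁ := by omega
          subst hn
          simp only [hg'def, if_neg h1, if_pos h2]
          exact hhpsi
        · simp only [hg'def, if_neg h1, if_neg h2]
          exact SigmaAux.psi_fix (fun l hl => le_trans (hhty l hl).2 (by omega))
  have hg'big : (⟨g', hg'inv⟩ : invLim H) ∈ bigG H := by
    intro m hm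
    refine ⟨n₁ + 1, fun n hn => ?_⟩
    simp only [hg'def, if_neg (show ¬ n ≤ n₁ by omega), if_neg (show ¬ n₁ + 1 ≤ n₁ by omega)]
  have hggW : g' ∈ Wo := by
    apply hsub
    intro i hi
    have hin : i ≤ n₁ := le_trans (Finset.le_sup (f := id) hi) (le_max_right _ _)
    simp only [hg'def, if_pos hin]
    exact (hIu i hi).2
  have hggS := hUS (show (⟨⟨g', hg'inv⟩, hg'big⟩ : bigG H) ∈ _ from hggW)
  obtain ⟨hgg1, -⟩ := hggS
  have e1 := hgg1 (n₁ + 1) (by omega)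
  simp only [hg'def, if_neg (show ¬ n₁ + 1 ≤ n₁ by omega), if_pos hKn₁] at e1
  have e2 := hf1 n₁ hKn₁
  rw [e1, ← e2] at hhlen
  exact lt_irrefl _ hhlen

end
end

section
/- The topological group G, with the subspace topology inherited from lim← G_n, is not a Baire space: G is a countable union of closed subsets each having empty interior in G. -/
/-!
Setting: `H 1, H 2, …` is a sequence of nontrivial groups (`H 0` is an unused dummy
factor).  `Gₙ = H 1 ∗ ⋯ ∗ H n` is realized canonically as the set of elements of the big
free product `Monoid.CoprodI H` whose reduced word only uses letters of type `i` with
`1 ≤ i ≤ n` (in particular `G₀` is trivial).  `ψ n : G (n+1) → G n` is realized as the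
homomorphism of the big free product which is the identity on each `H i` with `i ≤ n`
and kills all the other factors.  The inverse limit `lim← Gₙ` is the set of sequences
`f` with `f n ∈ Gₙ` and `ψ n (f (n+1)) = f n`; since each `Gₙ` is discrete it carries the
topology inherited from the product of discrete topologies (we give the big free product
the discrete topology `⊥`).
-/

noncomputable section

namespace NotBaireAux
open Monoid Monoid.CoprodI
variable {H : ℕ → Type*} [∀ i, Group (H i)]

lemma redWord_prod (w : Monoid.CoprodI.Word H) : redWord w.prod = w.toList := by
  letI : ∀ i, DecidableEq (H i) := fun _ => Classical.decEq _
  unfold redWord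
  exact congrArg Monoid.CoprodI.Word.toList (Monoid.CoprodI.Word.equiv.apply_symm_apply w)

lemma prod_redWord (g : Monoid.CoprodI H) :
    ((redWord g).map fun l => Monoid.CoprodI.of l.2).prod = g := by
  letI : ∀ i, DecidableEq (H i) := fun _ => Classical.decEq _
  exact Monoid.CoprodI.Word.equiv.symm_apply_apply g

lemma redWord_ne_one (g : Monoid.CoprodI H) : ∀ l ∈ redWord g, l.2 ≠ 1 := by
  unfold redWord
  exact Monoid.CoprodI.Word.ne_one _

lemma redWord_chain (g : Monoid.CoprodI H) :
    (redWord g).Chain' fun l l' => l.1 ≠ l'.1 := by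
  unfold redWord
  exact Monoid.CoprodI.Word.chain_ne _

lemma redWord_one : redWord (1 : Monoid.CoprodI H) = [] := by
  rw [← Monoid.CoprodI.Word.prod_empty, redWord_prod]
  rfl

lemma psi_fixes {n : ℕ} {g : Monoid.CoprodI H} (hg : ∀ l ∈ redWord g, l.1 ≤ n) :
    psi n g = g := by
  conv_lhs => rw [← prod_redWord g]
  conv_rhs => rw [← prod_redWord g]
  rw [map_list_prod (psi n), List.map_map]
  congr 1
  refine List.map_congr_left fun l hl => ?_
  simp only [Function.comp_apply, psi, Monoid.CoprodI.lift_of, if_pos (hg l hl)]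

lemma exists_x (f : ℕ → Monoid.CoprodI H) (hf : f ∈ invLim H) (K : ℕ) (hK : 1 ≤ K)
    (a : H 1) (ha : a ≠ 1) (b : H (K + 1)) (hb : b ≠ 1) :
    ∃ x : Monoid.CoprodI H,
      redWord x = redWord (f K) ++ [⟨K + 1, b⟩, ⟨1, a⟩, ⟨K + 1, b⁻¹⟩, ⟨1, a⁻¹⟩] ∧
      psi K x = f K := by
  have hKne : ¬ (K + 1 ≤ 1) := by omega
  have hlet := hf.1 K
  refine ⟨Monoid.CoprodI.Word.prod
    ⟨redWord (f K) ++ [⟨K + 1, b⟩, ⟨1, a⟩, ⟨K + 1, b⁻¹⟩, ⟨1, a⁻¹⟩], ?_, ?_⟩, ?_, ?_⟩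
  · intro l hl
    rcases List.mem_append.mp hl with h | h
    · exact redWord_ne_one (f K) l h
    · simp only [List.mem_cons, List.not_mem_nil, or_false] at h
      rcases h with rfl | rfl | rfl | rfl
      · exact hb
      · exact ha
      · exact inv_ne_one.mpr hb
      · exact inv_ne_one.mpr ha
  · rw [List.isChain_append]
    refine ⟨redWord_chain (f K), ?_, ?_⟩
    · simp only [List.isChain_cons_cons, List.isChain_singleton, and_true]
      refine ⟨?_, ?_, ?_⟩ <;> simp <;> omega
    · intro x hx y hy
      simp only [List.head?_cons, Option.mem_some_iff] at hy
      subst hy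
      obtain ⟨hne, rfl⟩ := List.mem_getLast?_eq_getLast hx
      have := (hlet _ (List.getLast_mem hne)).2
      simp only [ne_eq]
      omega
  · rw [redWord_prod]
  · rw [Monoid.CoprodI.Word.prod]
    simp only [List.map_append, List.prod_append, List.map_cons, List.map_nil, List.prod_cons,
      List.prod_nil]
    rw [prod_redWord]
    have h1 : ¬ (K + 1 ≤ K) := by omega
    have h2 : (1 : ℕ) ≤ K := hK
    simp only [map_mul, map_one, psi, Monoid.CoprodI.lift_of, if_neg h1, if_pos h2,
      MonoidHom.one_apply, one_mul, mul_one]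
    rw [← map_mul, mul_inv_cancel, map_one, mul_one]
    exact psi_fixes (fun l hl => (hlet l hl).2)

end NotBaireAux

/-- The topological group `G`, with the subspace topology inherited
from `lim← Gₙ`, is not a Baire space. -/
theorem bigG_not_baireSpace (H : ℕ → Type*) [∀ i, Group (H i)]
    (hH : ∀ i, 1 ≤ i → Nontrivial (H i)) :
    ¬ BaireSpace (bigG H) := by
  classical
  intro hB
  haveI : DiscreteTopology (Monoid.CoprodI H) := ⟨rfl⟩
  -- the identity point of `bigG`
  have honeInv : (fun _ => (1 : Monoid.CoprodI H)) ∈ invLim H := by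
    constructor
    · intro n l hl
      rw [NotBaireAux.redWord_one] at hl
      exact absurd hl List.not_mem_nil
    · intro n
      exact map_one _
  have honeBig : (⟨_, honeInv⟩ : ↥(invLim H)) ∈ bigG H := fun m _ => ⟨0, fun n _ => rfl⟩
  haveI : Nonempty ↥(bigG H) := ⟨⟨⟨_, honeInv⟩, honeBig⟩⟩
  -- each fiber is closed
  have hclosed : ∀ N : ℕ, IsClosed (sigmaFiber H N) := by
    intro N
    have hc : ∀ i j : ℕ, Continuous (fun q : ↥(invLim H) => (q.1 i, q.1 j)) := fun i j =>
      ((continuous_apply i).comp continuous_subtype_val).prodMk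
        ((continuous_apply j).comp continuous_subtype_val)
    have heq : sigmaFiber H N =
        (⋂ n, (fun q : ↥(invLim H) => (q.1 n, q.1 N)) ⁻¹'
          {p : Monoid.CoprodI H × Monoid.CoprodI H | N ≤ n → kappa 1 p.1 = kappa 1 p.2}) ∩
        ((fun q : ↥(invLim H) => (q.1 (N - 1), q.1 N)) ⁻¹'
          {p : Monoid.CoprodI H × Monoid.CoprodI H | N = 1 ∨ kappa 1 p.1 ≠ kappa 1 p.2}) := by
      ext q
      simp [sigmaFiber, Set.mem_iInter]
    rw [heq]
    exact (isClosed_iInter fun n => (isClosed_discrete _).preimage (hc n N)).inter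
      ((isClosed_discrete _).preimage (hc (N - 1) N))
  -- the open dense sets
  set u : ℕ → Set ↥(bigG H) := fun N => (Subtype.val ⁻¹' (sigmaFiber H (N + 1)))ᶜ with hu
  have hopen : ∀ N, IsOpen (u N) :=
    fun N => ((hclosed (N + 1)).preimage continuous_subtype_val).isOpen_compl
  -- density
  have hdense : ∀ N, Dense (u N) := by
    intro N
    rw [dense_iff_inter_open]
    rintro U hU ⟨p, hpU⟩
    obtain ⟨V, hV, rfl⟩ := isOpen_induced_iff.mp hU
    obtain ⟨W, hW, rfl⟩ := isOpen_induced_iff.mp hV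
    have hpW : (p.1.1 : ℕ → Monoid.CoprodI H) ∈ W := hpU
    obtain ⟨I, su, hsu, hsub⟩ := isOpen_pi_iff.mp hW _ hpW
    set f : ℕ → Monoid.CoprodI H := p.1.1 with hfdef
    have hf : f ∈ invLim H := p.1.2
    set K : ℕ := I.sup id + N + 1 with hKdef
    haveI := hH 1 le_rfl
    haveI := hH (K + 1) (by omega)
    obtain ⟨a, ha⟩ := exists_ne (1 : H 1)
    obtain ⟨b, hb⟩ := exists_ne (1 : H (K + 1))
    obtain ⟨x, hxred, hxpsi⟩ := NotBaireAux.exists_x f hf K (by omega) a ha b hb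
    have hxlet : ∀ l ∈ redWord x, 1 ≤ l.1 ∧ l.1 ≤ K + 1 := by
      rw [hxred]
      intro l hl
      rcases List.mem_append.mp hl with h | h
      · exact ⟨(hf.1 K l h).1, le_trans (hf.1 K l h).2 (by omega)⟩
      · simp only [List.mem_cons, List.not_mem_nil, or_false] at h
        rcases h with rfl | rfl | rfl | rfl <;> simp
    set g : ℕ → Monoid.CoprodI H := fun n => if n ≤ K then f n else x with hgdef
    have hgK : g K = f K := by simp [hgdef]
    have hgx : ∀ n, K + 1 ≤ n → g n = x := by
      intro n hn
      simp only [hgdef]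
      rw [if_neg (by omega)]
    have hgInv : g ∈ invLim H := by
      constructor
      · intro n l hl
        by_cases hn : n ≤ K
        · simp only [hgdef, if_pos hn] at hl
          exact hf.1 n l hl
        · simp only [hgdef, if_neg hn] at hl
          exact ⟨(hxlet l hl).1, le_trans (hxlet l hl).2 (by omega)⟩
      · intro n
        rcases Nat.lt_trichotomy n K with h | rfl | h
        · have h1 : n + 1 ≤ K := h
          simp only [hgdef, if_pos h1, if_pos (by omega : n ≤ K)]
          exact hf.2 n
        · simp only [hgdef, if_neg (by omega : ¬ (K + 1 ≤ K)), if_pos (le_refl K)]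
          exact hxpsi
        · simp only [hgdef, if_neg (by omega : ¬ (n + 1 ≤ K)), if_neg (by omega : ¬ (n ≤ K))]
          exact NotBaireAux.psi_fixes fun l hl => le_trans (hxlet l hl).2 h
    have hgBig : (⟨g, hgInv⟩ : ↥(invLim H)) ∈ bigG H := by
      intro m hm
      refine ⟨K + 1, fun n hn => ?_⟩
      show kappa m (g n) = kappa m (g (K + 1))
      rw [hgx n hn, hgx (K + 1) le_rfl]
    refine ⟨⟨⟨g, hgInv⟩, hgBig⟩, ?_, ?_⟩
    · show g ∈ W
      apply hsub
      intro i hi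
      have hiK : i ≤ K := by
        have := Finset.le_sup (f := id) hi
        simp only [id] at this
        omega
      simp only [hgdef, if_pos hiK]
      exact (hsu i hi).2
    · show ¬ _
      intro hmem
      obtain ⟨h1, -⟩ := hmem
      have e1 := h1 K (by omega)
      have e2 := h1 (K + 1) (by omega)
      rw [show (⟨g, hgInv⟩ : ↥(invLim H)).1 = g from rfl] at e1 e2
      rw [hgx (K + 1) le_rfl] at e2
      rw [hgK] at e1
      have hkap : kappa 1 x = kappa 1 (f K) ++ [⟨1, a⟩, ⟨1, a⁻¹⟩] := by
        have hKne : ¬ (K + 1 ≤ 1) := by omega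
        simp [kappa, hxred, List.filter_append, hKne]
      rw [hkap, e1] at e2
      have := congrArg List.length e2
      simp at this
  -- the intersection is empty
  have hcover : (⋂ N, u N) = ∅ := by
    rw [Set.eq_empty_iff_forall_notMem]
    intro p hp
    obtain ⟨N₀, hN₀⟩ := p.2 1 le_rfl
    have hex : ∃ M, 1 ≤ M ∧ ∀ n, M ≤ n → kappa 1 (p.1.1 n) = kappa 1 (p.1.1 M) :=
      ⟨max N₀ 1, le_max_right _ _, fun n hn => by
        rw [hN₀ n (le_trans (le_max_left _ _) hn), hN₀ (max N₀ 1) (le_max_left _ _)]⟩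
    set M := Nat.find hex with hM
    obtain ⟨hM1, hMs⟩ := Nat.find_spec hex
    have hmem : p.1 ∈ sigmaFiber H ((M - 1) + 1) := by
      have hMM : M - 1 + 1 = M := by omega
      rw [hMM]
      constructor
      · exact hMs
      · by_cases h1 : M = 1
        · exact Or.inl h1
        · refine Or.inr fun heq => ?_
          have hlt : M - 1 < M := by omega
          refine Nat.find_min hex hlt ⟨by omega, fun n hn => ?_⟩
          rcases Nat.lt_or_ge n M with hlt2 | hge
          · have hn' : n = M - 1 := by omega
            rw [hn']
          · rw [hMs n hge, heq]
    exact (Set.mem_iInter.mp hp (M - 1)) hmem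
  have hfin := (dense_iInter_of_isOpen hopen hdense).nonempty
  rw [hcover] at hfin
  exact Set.not_nonempty_empty hfin


end
end

section
/- The topological group G, with the subspace topology inherited from lim← G_n, admits no complete metric compatible with its topology; that is, G is not completely metrizable. -/
/-!
Setting: `H 1, H 2, …` is a sequence of nontrivial groups (`H 0` is an unused dummy
factor).  `Gₙ = H 1 ∗ ⋯ ∗ H n` is realized canonically as the set of elements of the big
free product `Monoid.CoprodI H` whose reduced word only uses letters of type `i` with
`1 ≤ i ≤ n` (in particular `G₀` is trivial).  `ψ n : G (n+1) → G n` is realized as the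
homomorphism of the big free product which is the identity on each `H i` with `i ≤ n`
and kills all the other factors.  The inverse limit `lim← Gₙ` is the set of sequences
`f` with `f n ∈ Gₙ` and `ψ n (f (n+1)) = f n`; since each `Gₙ` is discrete it carries the
topology inherited from the product of discrete topologies (we give the big free product
the discrete topology `⊥`).
-/

noncomputable section

namespace AuxProof

variable {H : ℕ → Type*} [∀ i, Group (H i)]

lemma redWord_prod (w : Monoid.CoprodI.Word H) : redWord w.prod = w.toList := by
  letI : ∀ i, DecidableEq (H i) := fun _ => Classical.decEq _
  show (Monoid.CoprodI.Word.equiv w.prod).toList = w.toList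
  congr 1
  exact Monoid.CoprodI.Word.equiv.apply_symm_apply w

lemma prod_redWord (g : Monoid.CoprodI H) :
    ((redWord g).map fun l => Monoid.CoprodI.of l.2).prod = g := by
  letI : ∀ i, DecidableEq (H i) := fun _ => Classical.decEq _
  exact Monoid.CoprodI.Word.equiv.symm_apply_apply g

lemma redWord_ne_one (g : Monoid.CoprodI H) : ∀ l ∈ redWord g, l.2 ≠ 1 := by
  letI : ∀ i, DecidableEq (H i) := fun _ => Classical.decEq _
  exact (Monoid.CoprodI.Word.equiv g).ne_one

lemma redWord_chain (g : Monoid.CoprodI H) :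
    (redWord g).Chain' fun a b => a.1 ≠ b.1 := by
  letI : ∀ i, DecidableEq (H i) := fun _ => Classical.decEq _
  exact (Monoid.CoprodI.Word.equiv g).chain_ne

lemma redWord_one : redWord (1 : Monoid.CoprodI H) = [] := by
  have := redWord_prod (H := H) Monoid.CoprodI.Word.empty
  rwa [Monoid.CoprodI.Word.prod_empty] at this

lemma redWord_mul_list (g : Monoid.CoprodI H) (L : List (Σ i, H i))
    (h1 : ∀ l ∈ L, l.2 ≠ 1)
    (h2 : L.Chain' fun a b => a.1 ≠ b.1)
    (h3 : ∀ p ∈ (redWord g).getLast?, ∀ q ∈ L.head?, p.1 ≠ q.1) :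
    redWord (g * (L.map fun l => Monoid.CoprodI.of l.2).prod) = redWord g ++ L := by
  set W : Monoid.CoprodI.Word H :=
    ⟨redWord g ++ L, by
      intro l hl
      rcases List.mem_append.mp hl with h | h
      · exact redWord_ne_one g l h
      · exact h1 l h,
     List.isChain_append.mpr ⟨redWord_chain g, h2, h3⟩⟩ with hW
  have hp : W.prod = g * (L.map fun l => Monoid.CoprodI.of l.2).prod := by
    show ((redWord g ++ L).map fun l => Monoid.CoprodI.of l.2).prod = _
    rw [List.map_append, List.prod_append, prod_redWord]
  rw [← hp, redWord_prod]

lemma psi_of {n i : ℕ} (y : H i) :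
    psi (H := H) n (Monoid.CoprodI.of y) = if i ≤ n then Monoid.CoprodI.of y else 1 := by
  rw [psi, Monoid.CoprodI.lift_of]
  split_ifs <;> rfl

lemma psi_fixed {n : ℕ} (g : Monoid.CoprodI H) (hg : ∀ l ∈ redWord g, l.1 ≤ n) :
    psi n g = g := by
  conv_lhs => rw [← prod_redWord g]
  rw [map_list_prod, List.map_map]
  conv_rhs => rw [← prod_redWord g]
  congr 1
  apply List.map_congr_left
  intro l hl
  show psi n (Monoid.CoprodI.of l.2) = Monoid.CoprodI.of l.2
  rw [psi_of, if_pos (hg l hl)]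

end AuxProof

open Topology Filter AuxProof

/-- The topological group `G`, with the subspace topology inherited
from `lim← Gₙ`, admits no complete metric compatible with its topology:  `G` is not
completely metrizable. -/
theorem bigG_not_completely_metrizable (H : ℕ → Type*) [∀ i, Group (H i)]
    (hH : ∀ i, 1 ≤ i → Nontrivial (H i)) :
    ¬ ∃ m : MetricSpace (bigG H),
        m.toUniformSpace.toTopologicalSpace = instTopologicalSpaceSubtype ∧
        @CompleteSpace (bigG H) m.toUniformSpace := by
  rintro ⟨m, hTop, hComp⟩
  haveI : DiscreteTopology (Monoid.CoprodI H) := ⟨rfl⟩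
  -- the constant-one sequence is in `bigG`
  have onemem : (fun _ => (1 : Monoid.CoprodI H)) ∈ invLim H := by
    constructor
    · intro n l hl
      rw [redWord_one] at hl
      exact absurd hl List.not_mem_nil
    · intro n
      exact map_one _
  haveI : Nonempty (bigG H) :=
    ⟨⟨⟨_, onemem⟩, fun m hm => ⟨0, fun n hn => rfl⟩⟩⟩
  haveI hB : BaireSpace (bigG H) := by
    rw [← hTop]
    letI := m
    haveI := hComp
    exact @BaireSpace.of_completelyPseudoMetrizable _ m.toUniformSpace.toTopologicalSpace inferInstance
  -- the closed sets
  set F : ℕ → Set (bigG H) :=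
    fun N => {x | ∀ n, N ≤ n → kappa 1 (x.1.1 n) = kappa 1 (x.1.1 N)} with hF
  have hcl : ∀ N, IsClosed (F N) := by
    intro N
    have hFi : F N = ⋂ n, {x : bigG H | N ≤ n → kappa 1 (x.1.1 n) = kappa 1 (x.1.1 N)} := by
      ext x
      simp only [hF, Set.mem_setOf_eq, Set.mem_iInter]
    rw [hFi]
    refine isClosed_iInter fun n => ?_
    have hcont : Continuous fun x : bigG H =>
        ((x.1.1 n, x.1.1 N) : Monoid.CoprodI H × Monoid.CoprodI H) :=
      ((continuous_apply n).comp (continuous_subtype_val.comp continuous_subtype_val)).prodMk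
        ((continuous_apply N).comp (continuous_subtype_val.comp continuous_subtype_val))
    exact (isClosed_discrete
      {p : Monoid.CoprodI H × Monoid.CoprodI H | N ≤ n → kappa 1 p.1 = kappa 1 p.2}).preimage
      hcont
  have hun : ⋃ N, F N = Set.univ := by
    ext x
    simp only [Set.mem_iUnion, Set.mem_univ, iff_true]
    obtain ⟨N, hN⟩ := x.2 1 le_rfl
    exact ⟨N, hN⟩
  obtain ⟨N₀, x, hx⟩ := nonempty_interior_of_iUnion_of_closed hcl hun
  have hxF : x ∈ F N₀ := interior_subset hx
  have hnb : F N₀ ∈ 𝓝 x := mem_interior_iff_mem_nhds.mp hx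
  have hind : IsInducing (fun y : bigG H => y.1.1) :=
    (IsInducing.subtypeVal.comp IsInducing.subtypeVal :
      IsInducing ((Subtype.val : invLim H → ℕ → Monoid.CoprodI H) ∘ Subtype.val))
  rw [hind.nhds_eq_comap] at hnb
  obtain ⟨s, hs, hsub⟩ := Filter.mem_comap.mp hnb
  rw [nhds_pi] at hs
  obtain ⟨I, hIfin, t, ht, hIt⟩ := Filter.mem_pi.mp hs
  obtain ⟨k, hk⟩ := hIfin.bddAbove
  have hcyl : ∀ g : bigG H, (∀ n, n ≤ k → g.1.1 n = x.1.1 n) → g ∈ F N₀ := by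
    intro g hg
    apply hsub
    apply hIt
    refine Set.mem_pi.mpr fun i hi => ?_
    show g.1.1 i ∈ t i
    rw [hg i (hk hi)]
    exact mem_of_mem_nhds (ht i)
  -- construction of the perturbed element
  set M : ℕ := max k N₀ + 1 with hM
  haveI := hH (M + 1) (by omega)
  haveI := hH 1 le_rfl
  obtain ⟨a, ha⟩ := exists_ne (1 : H (M + 1))
  obtain ⟨b, hb⟩ := exists_ne (1 : H 1)
  set e : Monoid.CoprodI H := x.1.1 k with he
  set L : List (Σ i, H i) := [⟨M + 1, a⟩, ⟨1, b⟩, ⟨M + 1, a⟩, ⟨1, b⁻¹⟩] with hL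
  set T : Monoid.CoprodI H := (L.map fun l => Monoid.CoprodI.of l.2).prod with hT
  have heb : ∀ l ∈ redWord e, 1 ≤ l.1 ∧ l.1 ≤ k := x.1.2.1 k
  have hMne1 : ¬ (M + 1 ≤ M) := by omega
  have h1M : (1 : ℕ) ≤ M := by omega
  have hLb : ∀ l ∈ L, l.1 = M + 1 ∨ l.1 = 1 := by
    intro l hl
    simp only [hL, List.mem_cons, List.not_mem_nil, or_false] at hl
    rcases hl with rfl | rfl | rfl | rfl
    exacts [Or.inl rfl, Or.inr rfl, Or.inl rfl, Or.inr rfl]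
  have hredeT : redWord (e * T) = redWord e ++ L := by
    apply redWord_mul_list
    · intro l hl
      simp only [hL, List.mem_cons, List.not_mem_nil, or_false] at hl
      rcases hl with rfl | rfl | rfl | rfl
      · exact ha
      · exact hb
      · exact ha
      · exact inv_ne_one.mpr hb
    · simp only [hL, List.isChain_cons_cons, List.isChain_singleton, and_true]
      refine List.isChain_cons_cons.mpr ⟨?_, List.isChain_cons_cons.mpr ⟨?_, List.isChain_cons_cons.mpr ⟨?_, List.isChain_singleton _⟩⟩⟩ <;> simp <;> omega
    · intro p hp q hq
      have hpmem : p ∈ redWord e := List.mem_of_mem_getLast? hp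
      have hpk := (heb p hpmem).2
      simp only [hL, List.head?_cons, Option.mem_some_iff] at hq
      subst hq
      simp only []
      omega
  set g : ℕ → Monoid.CoprodI H :=
    fun n => if n ≤ k then x.1.1 n else if n ≤ M then e else e * T with hg
  have hgconst : ∀ n, M + 1 ≤ n → g n = e * T := by
    intro n hn
    simp only [hg]
    rw [if_neg (by omega), if_neg (by omega)]
  have hpsiT : psi M T = 1 := by
    have hTe : T = Monoid.CoprodI.of a *
        (Monoid.CoprodI.of b * (Monoid.CoprodI.of a * Monoid.CoprodI.of b⁻¹)) := by
      simp [hT, hL]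
    rw [hTe]
    simp only [map_mul, psi_of, if_neg hMne1, if_pos h1M, one_mul]
    rw [← map_mul, mul_inv_cancel, map_one]
  have hginv : g ∈ invLim H := by
    constructor
    · intro n l hl
      by_cases h1 : n ≤ k
      · simp only [hg, if_pos h1] at hl
        exact x.1.2.1 n l hl
      · by_cases h2 : n ≤ M
        · simp only [hg, if_neg h1, if_pos h2] at hl
          obtain ⟨u1, u2⟩ := heb l hl
          exact ⟨u1, by omega⟩
        · simp only [hg, if_neg h1, if_neg h2] at hl
          rw [hredeT] at hl
          rcases List.mem_append.mp hl with h | h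
          · obtain ⟨u1, u2⟩ := heb l h
            exact ⟨u1, by omega⟩
          · rcases hLb l h with h' | h' <;> omega
    · intro n
      by_cases h1 : n + 1 ≤ k
      · have e1 : g (n + 1) = x.1.1 (n + 1) := by simp only [hg, if_pos h1]
        have e2 : g n = x.1.1 n := by simp only [hg]; rw [if_pos (by omega)]
        rw [e1, e2]
        exact x.1.2.2 n
      · by_cases h2 : n + 1 ≤ M
        · have e1 : g (n + 1) = e := by simp only [hg]; rw [if_neg h1, if_pos h2]
          have e2 : g n = e := by
            simp only [hg]
            by_cases h3 : n ≤ k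
            · rw [if_pos h3]
              have : n = k := by omega
              rw [this]
            · rw [if_neg h3, if_pos (by omega)]
          rw [e1, e2]
          exact psi_fixed e fun l hl => by have := (heb l hl).2; omega
        · by_cases h3 : n = M
          · subst h3
            have e1 : g (M + 1) = e * T := hgconst _ le_rfl
            have e2 : g M = e := by simp only [hg]; rw [if_neg (by omega), if_pos le_rfl]
            rw [e1, e2, map_mul, hpsiT, mul_one]
            exact psi_fixed e fun l hl => by have := (heb l hl).2; omega
          · have e1 : g (n + 1) = e * T := hgconst _ (by omega)
            have e2 : g n = e * T := hgconst _ (by omega)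
            rw [e1, e2]
            refine psi_fixed _ fun l hl => ?_
            rw [hredeT] at hl
            rcases List.mem_append.mp hl with h | h
            · have := (heb l h).2; omega
            · rcases hLb l h with h' | h' <;> omega
  have hgbig : (⟨g, hginv⟩ : invLim H) ∈ bigG H := by
    intro m' hm'
    refine ⟨M + 1, fun n hn => ?_⟩
    show kappa m' (g n) = kappa m' (g (M + 1))
    rw [hgconst n hn, hgconst (M + 1) le_rfl]
  set G : bigG H := ⟨⟨g, hginv⟩, hgbig⟩ with hG
  have hGF : G ∈ F N₀ := by
    apply hcyl
    intro n hn
    show g n = x.1.1 n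
    simp only [hg]
    rw [if_pos hn]
  have h1 : kappa 1 (g (M + 1)) = kappa 1 (g N₀) := hGF (M + 1) (by omega)
  have hkN0 : kappa 1 (g N₀) = kappa 1 e := by
    by_cases hc : N₀ ≤ k
    · have eg : g N₀ = x.1.1 N₀ := by simp only [hg]; rw [if_pos hc]
      rw [eg]
      exact (hxF k hc).symm
    · have eg : g N₀ = e := by simp only [hg]; rw [if_neg hc, if_pos (by omega)]
      rw [eg]
  have hgM1 : g (M + 1) = e * T := hgconst _ le_rfl
  rw [hgM1, hkN0] at h1
  have hkap : kappa 1 (e * T) = kappa 1 e ++ [⟨1, b⟩, ⟨1, b⁻¹⟩] := by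
    unfold kappa
    rw [hredeT, List.filter_append]
    congr 1
  rw [hkap] at h1
  have hlen := congrArg List.length h1
  simp at hlen


end
end
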